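/- For a Fock-space construction F and a natural transformation η_A : A → FA, the composite Δ̄_A ∘ η_A : A → FA ⊗ FA equals the sum of (η_A ⊗ η̄_A) ∘ ρ⁻¹_A and (η̄_A ⊗ η_A) ∘ λ⁻¹_A, where λ and ρ are the unitors of ⊗. -/

import Mathlib

open CategoryTheory CategoryTheory.Limits CategoryTheory.MonoidalCategory ZeroObject

universe v u

variable (C : Type u) [Category.{v} C] [HasZeroObject C] [HasZeroMorphisms C]
  [HasBinaryBiproducts C] [MonoidalCategory C] [SymmetricCategory C]

/-- The diagonal `Δ_A = ⟨id, id⟩ : A ⟶ A ⊞ A`. -/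
noncomputable abbrev bdiag (A : C) : A ⟶ A ⊞ A := biprod.lift (𝟙 A) (𝟙 A)

/-- The codiagonal `∇_A = [id, id] : A ⊞ A ⟶ A`. -/
noncomputable abbrev bcodiag (A : C) : A ⊞ A ⟶ A := biprod.desc (𝟙 A) (𝟙 A)

variable {C}

/-- Convolution addition of morphisms induced by the biproduct structure:
`f + g = ∇_B ∘ (f ⊞ g) ∘ Δ_A`. -/
noncomputable def cadd {A B : C} (f g : A ⟶ B) : A ⟶ B :=
  bdiag C A ≫ biprod.map f g ≫ bcodiag C B

variable (C)

/-- Compatibility of the biproduct structure and the symmetric monoidal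
structure: the tensor product is bilinear for the biproduct (convolution)
enrichment.  A category carrying both compatible structures is a category of
spaces and linear maps. -/
class TensorCompatible : Prop where
  zero_tensorHom : ∀ {A B X Y : C} (f : X ⟶ Y), (0 : A ⟶ B) ⊗ₘ f = 0
  tensorHom_zero : ∀ {A B X Y : C} (f : X ⟶ Y), f ⊗ₘ (0 : A ⟶ B) = 0
  cadd_tensorHom : ∀ {A B X Y : C} (f g : A ⟶ B) (h : X ⟶ Y),
    cadd f g ⊗ₘ h = cadd (f ⊗ₘ h) (g ⊗ₘ h)
  tensorHom_cadd : ∀ {A B X Y : C} (f g : A ⟶ B) (h : X ⟶ Y),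
    h ⊗ₘ cadd f g = cadd (h ⊗ₘ f) (h ⊗ₘ g)

/-- A (bosonic) Fock-space construction on a category of spaces and linear
maps: a strong symmetric monoidal functor from the biproduct monoidal
structure `(0, ⊞)` to the symmetric monoidal structure `(𝟙_ C, ⊗)`. -/
structure FockConstruction where
  /-- The underlying functor. -/
  F : C ⥤ C
  /-- The unit comparison isomorphism `I ≅ F 0`. -/
  φ₀ : 𝟙_ C ≅ F.obj (0 : C)
  /-- The tensor comparison isomorphism `F A ⊗ F B ≅ F (A ⊞ B)`. -/
  φ : ∀ A B : C, F.obj A ⊗ F.obj B ≅ F.obj (A ⊞ B)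
  φ_natural : ∀ {A B A' B' : C} (f : A ⟶ A') (g : B ⟶ B'),
    (F.map f ⊗ₘ F.map g) ≫ (φ A' B').hom = (φ A B).hom ≫ F.map (biprod.map f g)
  left_unitality : ∀ A : C,
    (φ₀.hom ⊗ₘ 𝟙 (F.obj A)) ≫ (φ 0 A).hom ≫ F.map (biprod.desc 0 (𝟙 A)) =
      (λ_ (F.obj A)).hom
  right_unitality : ∀ A : C,
    (𝟙 (F.obj A) ⊗ₘ φ₀.hom) ≫ (φ A 0).hom ≫ F.map (biprod.desc (𝟙 A) 0) =
      (ρ_ (F.obj A)).hom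
  associativity : ∀ A B D : C,
    ((φ A B).hom ⊗ₘ 𝟙 (F.obj D)) ≫ (φ (A ⊞ B) D).hom ≫
        F.map (biprod.associator A B D).hom =
      (α_ (F.obj A) (F.obj B) (F.obj D)).hom ≫
        (𝟙 (F.obj A) ⊗ₘ (φ B D).hom) ≫ (φ A (B ⊞ D)).hom
  braided : ∀ A B : C,
    (φ A B).hom ≫ F.map (biprod.braiding A B).hom =
      (β_ (F.obj A) (F.obj B)).hom ≫ (φ B A).hom

namespace FockConstruction

variable {C} (Φ : FockConstruction C)

/-- The unit `η̄_A : I ⟶ F A` of the Fock bialgebra. -/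
noncomputable def unit (A : C) : 𝟙_ C ⟶ Φ.F.obj A :=
  Φ.φ₀.hom ≫ Φ.F.map (0 : (0 : C) ⟶ A)

/-- The multiplication `∇̄_A : F A ⊗ F A ⟶ F A` of the Fock bialgebra. -/
noncomputable def mult (A : C) : Φ.F.obj A ⊗ Φ.F.obj A ⟶ Φ.F.obj A :=
  (Φ.φ A A).hom ≫ Φ.F.map (bcodiag C A)

/-- The counit `ε̄_A : F A ⟶ I` of the Fock bialgebra. -/
noncomputable def counit (A : C) : Φ.F.obj A ⟶ 𝟙_ C :=
  Φ.F.map (0 : A ⟶ (0 : C)) ≫ Φ.φ₀.inv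

/-- The comultiplication `Δ̄_A : F A ⟶ F A ⊗ F A` of the Fock bialgebra. -/
noncomputable def comult (A : C) : Φ.F.obj A ⟶ Φ.F.obj A ⊗ Φ.F.obj A :=
  Φ.F.map (bdiag C A) ≫ (Φ.φ A A).inv

/-- The creation operator `a⁺ = ∇̄_A ∘ (η_A ⊗ id) : A ⊗ F A ⟶ F A` associated
to a natural transformation `η : Id ⟶ F`. -/
noncomputable def creation (η : 𝟭 C ⟶ Φ.F) (A : C) : A ⊗ Φ.F.obj A ⟶ Φ.F.obj A :=
  (η.app A ⊗ₘ 𝟙 (Φ.F.obj A)) ≫ Φ.mult A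

/-- The annihilation operator `a⁻ = (ε_A ⊗ id) ∘ Δ̄_A : F A ⟶ A ⊗ F A`
associated to a natural transformation `ε : F ⟶ Id`. -/
noncomputable def annihilation (ε : Φ.F ⟶ 𝟭 C) (A : C) :
    Φ.F.obj A ⟶ A ⊗ Φ.F.obj A :=
  Φ.comult A ≫ (ε.app A ⊗ₘ 𝟙 (Φ.F.obj A))

end FockConstruction

section Aux

variable {C : Type u} [Category.{v} C] [HasZeroObject C] [HasZeroMorphisms C]
  [HasBinaryBiproducts C] [MonoidalCategory C] [SymmetricCategory C]

/-- Composing the diagonal with any map is the convolution sum of the two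
restrictions. -/
theorem bdiag_comp_eq_cadd {A B : C} (k : A ⊞ A ⟶ B) :
    bdiag C A ≫ k = cadd (biprod.inl ≫ k) (biprod.inr ≫ k) := by
  have h1 : biprod.map (biprod.inl ≫ k) (biprod.inr ≫ k) ≫ bcodiag C B =
      biprod.desc (biprod.inl ≫ k) (biprod.inr ≫ k) := by
    apply biprod.hom_ext' <;> simp
  have h2 : biprod.desc (biprod.inl ≫ k) (biprod.inr ≫ k) = k := by
    apply biprod.hom_ext' <;> simp
  rw [cadd, h1, h2]

theorem FockConstruction.map_inl_comp_phi_inv (Φ : FockConstruction C) (A : C) :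
    Φ.F.map (biprod.inl : A ⟶ A ⊞ A) ≫ (Φ.φ A A).inv =
      (ρ_ (Φ.F.obj A)).inv ≫ (𝟙 (Φ.F.obj A) ⊗ₘ Φ.unit A) := by
  have hmap : biprod.map (𝟙 A) (0 : (0 : C) ⟶ A) =
      biprod.desc (𝟙 A) 0 ≫ (biprod.inl : A ⟶ A ⊞ A) := by
    apply biprod.hom_ext' <;> simp
  have key : (𝟙 (Φ.F.obj A) ⊗ₘ Φ.unit A) ≫ (Φ.φ A A).hom =
      (ρ_ (Φ.F.obj A)).hom ≫ Φ.F.map (biprod.inl : A ⟶ A ⊞ A) := by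
    have : (𝟙 (Φ.F.obj A) ⊗ₘ Φ.unit A) ≫ (Φ.φ A A).hom =
        (𝟙 (Φ.F.obj A) ⊗ₘ Φ.φ₀.hom) ≫
          ((Φ.F.map (𝟙 A) ⊗ₘ Φ.F.map (0 : (0 : C) ⟶ A)) ≫ (Φ.φ A A).hom) := by
      rw [Φ.F.map_id]
      rw [MonoidalCategory.tensorHom_comp_tensorHom_assoc]
      simp [FockConstruction.unit]
    rw [this, Φ.φ_natural, hmap, Φ.F.map_comp]
    rw [← Category.assoc, ← Category.assoc, Category.assoc (𝟙 _ ⊗ₘ Φ.φ₀.hom),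
      Φ.right_unitality]
  rw [Iso.comp_inv_eq, Category.assoc, key, Iso.inv_hom_id_assoc]

theorem FockConstruction.map_inr_comp_phi_inv (Φ : FockConstruction C) (A : C) :
    Φ.F.map (biprod.inr : A ⟶ A ⊞ A) ≫ (Φ.φ A A).inv =
      (λ_ (Φ.F.obj A)).inv ≫ (Φ.unit A ⊗ₘ 𝟙 (Φ.F.obj A)) := by
  have hmap : biprod.map (0 : (0 : C) ⟶ A) (𝟙 A) =
      biprod.desc 0 (𝟙 A) ≫ (biprod.inr : A ⟶ A ⊞ A) := by
    apply biprod.hom_ext' <;> simp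
  have key : (Φ.unit A ⊗ₘ 𝟙 (Φ.F.obj A)) ≫ (Φ.φ A A).hom =
      (λ_ (Φ.F.obj A)).hom ≫ Φ.F.map (biprod.inr : A ⟶ A ⊞ A) := by
    have : (Φ.unit A ⊗ₘ 𝟙 (Φ.F.obj A)) ≫ (Φ.φ A A).hom =
        (Φ.φ₀.hom ⊗ₘ 𝟙 (Φ.F.obj A)) ≫
          ((Φ.F.map (0 : (0 : C) ⟶ A) ⊗ₘ Φ.F.map (𝟙 A)) ≫ (Φ.φ A A).hom) := by
      rw [Φ.F.map_id]
      rw [MonoidalCategory.tensorHom_comp_tensorHom_assoc]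
      simp [FockConstruction.unit]
    rw [this, Φ.φ_natural, hmap, Φ.F.map_comp]
    rw [← Category.assoc, ← Category.assoc, Category.assoc (Φ.φ₀.hom ⊗ₘ 𝟙 _),
      Φ.left_unitality]
  rw [Iso.comp_inv_eq, Category.assoc, key, Iso.inv_hom_id_assoc]

end Aux

/-- For a Fock-space construction `F` and a natural transformation
`η : Id ⟶ F`, `Δ̄_A ∘ η_A = (η_A ⊗ η̄_A) ∘ ρ⁻¹_A + (η̄_A ⊗ η_A) ∘ λ⁻¹_A`. -/
theorem FockConstruction.comult_comp_eta {C : Type u} [Category.{v} C]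
    [HasZeroObject C] [HasZeroMorphisms C] [HasBinaryBiproducts C]
    [MonoidalCategory C] [SymmetricCategory C] [TensorCompatible C]
    (Φ : FockConstruction C) (η : 𝟭 C ⟶ Φ.F) (A : C) :
    η.app A ≫ Φ.comult A =
      cadd ((ρ_ A).inv ≫ (η.app A ⊗ₘ Φ.unit A))
        ((λ_ A).inv ≫ (Φ.unit A ⊗ₘ η.app A)) := by
  have hnat : η.app A ≫ Φ.F.map (bdiag C A) = bdiag C A ≫ η.app (A ⊞ A) := by
    simpa using (η.naturality (bdiag C A)).symm
  have h1 : biprod.inl ≫ η.app (A ⊞ A) ≫ (Φ.φ A A).inv =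
      (ρ_ A).inv ≫ (η.app A ⊗ₘ Φ.unit A) := by
    have : (biprod.inl : A ⟶ A ⊞ A) ≫ η.app (A ⊞ A) =
        η.app A ≫ Φ.F.map biprod.inl := by
      simpa using η.naturality (biprod.inl : A ⟶ A ⊞ A)
    rw [← Category.assoc, this, Category.assoc,
      Φ.map_inl_comp_phi_inv A, ← Category.assoc]
    have hρ : η.app A ≫ (ρ_ (Φ.F.obj A)).inv = (ρ_ A).inv ≫ (η.app A ⊗ₘ 𝟙 (𝟙_ C)) := by
      rw [MonoidalCategory.rightUnitor_inv_naturality, MonoidalCategory.tensorHom_id]; rfl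
    rw [hρ, Category.assoc, MonoidalCategory.tensorHom_comp_tensorHom]
    simp
  have h2 : biprod.inr ≫ η.app (A ⊞ A) ≫ (Φ.φ A A).inv =
      (λ_ A).inv ≫ (Φ.unit A ⊗ₘ η.app A) := by
    have : (biprod.inr : A ⟶ A ⊞ A) ≫ η.app (A ⊞ A) =
        η.app A ≫ Φ.F.map biprod.inr := by
      simpa using η.naturality (biprod.inr : A ⟶ A ⊞ A)
    rw [← Category.assoc, this, Category.assoc,
      Φ.map_inr_comp_phi_inv A, ← Category.assoc]
    have hlam : η.app A ≫ (λ_ (Φ.F.obj A)).inv = (λ_ A).inv ≫ (𝟙 (𝟙_ C) ⊗ₘ η.app A) := by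
      rw [MonoidalCategory.leftUnitor_inv_naturality, MonoidalCategory.id_tensorHom]; rfl
    rw [hlam, Category.assoc, MonoidalCategory.tensorHom_comp_tensorHom]
    simp
  calc η.app A ≫ Φ.comult A
      = (η.app A ≫ Φ.F.map (bdiag C A)) ≫ (Φ.φ A A).inv := by
        rw [FockConstruction.comult, Category.assoc]
    _ = bdiag C A ≫ (η.app (A ⊞ A) ≫ (Φ.φ A A).inv) := by
        rw [hnat, Category.assoc]
    _ = cadd (biprod.inl ≫ η.app (A ⊞ A) ≫ (Φ.φ A A).inv)
          (biprod.inr ≫ η.app (A ⊞ A) ≫ (Φ.φ A A).inv) := bdiag_comp_eq_cadd _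
    _ = _ := by rw [h1, h2]
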